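/- arXiv:2309.11701 — 4 statements merged into one kernel-verified Lean document; each statement's English description precedes it below -/
import Mathlib

section
/- Let 1 < d ≤ D ≤ 2 be real numbers with D < (3+√5)d/2 - (1+√5)/2. Then d(2D-d-1)/(D²+D-Dd-1) ≥ 1. -/
theorem stmt_1 (d D : ℝ) (hd : 1 < d) (hdD : d ≤ D) (hD : D ≤ 2)
    (hsemi : 2 * D < (3 + Real.sqrt 5) * d - 1 - Real.sqrt 5) :
    0 < D ^ 2 + D - D * d - 1 ∧
      d * (2 * D - d - 1) / (D ^ 2 + D - D * d - 1) ≥ 1 := by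
  have h5 : Real.sqrt 5 ^ 2 = 5 := Real.sq_sqrt (by norm_num)
  have h5gt : 2 < Real.sqrt 5 := by nlinarith [Real.sqrt_nonneg 5]
  have hden : 0 < D ^ 2 + D - D * d - 1 := by nlinarith
  refine ⟨hden, ?_⟩
  rw [ge_iff_le, le_div_iff₀ hden]
  have key : 0 < (2 * D - (3 * d - 1 - Real.sqrt 5 * (d - 1))) *
      ((3 * d - 1 + Real.sqrt 5 * (d - 1)) - 2 * D) :=
    mul_pos (by nlinarith) (by nlinarith)
  nlinarith [key, h5]
end

section
/- Let 1 < d ≤ D ≤ 2 with m := d(2D-d-1)/(D²+D-Dd-1) < 1, and let r > 0. The function L ↦ max{L + m(r-L), dr - L} on [0, r] attains its minimum value d·r·(1 - (D-1)(D-d)/(2D² + (2-4d)D + d² + d - 2)) at the point L where the two expressions are equal. -/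
theorem stmt_2 (d D r m : ℝ) (hd : 1 < d) (hdD : d ≤ D) (hD : D ≤ 2) (hr : 0 < r)
    (hm : m = d * (2 * D - d - 1) / (D ^ 2 + D - D * d - 1))
    (hm0 : 0 ≤ m) (hm1 : m < 1) :
    ∃ L ∈ Set.Icc (0 : ℝ) r,
      L + m * (r - L) = d * r - L ∧
      max (L + m * (r - L)) (d * r - L)
        = d * r * (1 - (D - 1) * (D - d) / (2 * D ^ 2 + (2 - 4 * d) * D + d ^ 2 + d - 2)) ∧
      IsLeast ((fun L => max (L + m * (r - L)) (d * r - L)) '' Set.Icc (0 : ℝ) r)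
        (d * r * (1 - (D - 1) * (D - d) / (2 * D ^ 2 + (2 - 4 * d) * D + d ^ 2 + d - 2))) := by
  set P : ℝ := D ^ 2 + D - D * d - 1 with hPdef
  have hP0 : 0 < P := by nlinarith
  have h2m : 0 < 2 - m := by linarith
  set L : ℝ := r * (d - m) / (2 - m) with hLdef
  have hdm : 0 < d - m := by linarith
  have hL0 : 0 ≤ L := by positivity
  have hLr : L ≤ r := by
    rw [hLdef, div_le_iff₀ h2m]
    nlinarith
  have hL2 : L * (2 - m) = r * (d - m) := by
    rw [hLdef]; field_simp
  have heq : L + m * (r - L) = d * r - L := by nlinarith [hL2]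
  set Q : ℝ := 2 * D ^ 2 + (2 - 4 * d) * D + d ^ 2 + d - 2 with hQdef
  have hmP : m * P = d * (2 * D - d - 1) := by
    rw [hm]; field_simp
  have hQP : Q = P * (2 - m) := by
    linear_combination hmP
  have hQ0 : 0 < Q := by rw [hQP]; positivity
  have hval2 : (d * r - L) * Q = d * r * (Q - (D - 1) * (D - d)) := by
    rw [hQP]
    linear_combination (-P) * hL2 + r * hmP
  have hval : d * r - L = d * r * (1 - (D - 1) * (D - d) / Q) := by
    field_simp
    linear_combination hval2
  refine ⟨L, ⟨hL0, hLr⟩, heq, ?_, ?_, ?_⟩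
  · rw [heq, max_self]; exact hval
  · exact ⟨L, ⟨hL0, hLr⟩, by simp only [heq, max_self]; exact hval⟩
  · rintro y ⟨x, ⟨hx0, hxr⟩, rfl⟩
    simp only
    rw [← hval]
    rcases le_total x L with h | h
    · exact le_trans (by linarith) (le_max_right _ _)
    · refine le_trans ?_ (le_max_left _ _)
      rw [← heq]
      nlinarith
end

section
/- Let f : ℝ → ℝ be continuous and nondecreasing, let 1 < d ≤ D ≤ 2, and let r > 0. Suppose t ∈ (r/2, r). Then f(t) - f(r) + (d/D)·r - ((d+1-D)/D)·t > 0 whenever f(t) ≥ f(r) - (r - t). In particular, any solution t of f(t) = f(r) + ((D-1)/D)(dr - (d+1)t) - d(r-t) with [t,r] teal for f satisfies t ≤ r/2. -/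
theorem stmt_7 (f : ℝ → ℝ) (hcont : Continuous f) (hmono : Monotone f)
    (d D r : ℝ) (hd : 1 < d) (hdD : d ≤ D) (hD : D ≤ 2) (hr : 0 < r) :
    (∀ t : ℝ, r / 2 < t → t < r → f t ≥ f r - (r - t) →
      f t - f r + (d / D) * r - ((d + 1 - D) / D) * t > 0) ∧
    (∀ t ∈ Set.Icc (0 : ℝ) r,
      f t = f r + ((D - 1) / D) * (d * r - (d + 1) * t) - d * (r - t) →
      (∀ c ∈ Set.Icc t r, f r - f c ≤ r - c) →
      t ≤ r / 2) := by
  have hD0 : (0:ℝ) < D := by linarith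
  have part1 : ∀ t : ℝ, r / 2 < t → t < r → f t ≥ f r - (r - t) →
      f t - f r + (d / D) * r - ((d + 1 - D) / D) * t > 0 := by
    intro t ht1 ht2 hft
    rw [gt_iff_lt, ← sub_pos]
    have key : 0 < D * (f t - f r + (d / D) * r - ((d + 1 - D) / D) * t) := by
      have h1 : D * ((d / D) * r) = d * r := by field_simp
      have h2 : D * (((d + 1 - D) / D) * t) = (d + 1 - D) * t := by field_simp
      nlinarith [mul_pos hr (sub_pos.mpr hd)]
    nlinarith
  refine ⟨part1, ?_⟩
  intro t ht heq hteal
  by_contra hlt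
  push_neg at hlt
  have ht2 : t < r := by
    rcases lt_or_eq_of_le ht.2 with h | h
    · exact h
    · exfalso
      rw [h] at heq
      have : ((D - 1) / D) * (d * r - (d + 1) * r) < 0 := by
        apply mul_neg_of_pos_of_neg
        · apply div_pos <;> linarith
        · nlinarith
      nlinarith [heq]
  have hft : f t ≥ f r - (r - t) := by
    have := hteal t ⟨le_refl t, ht.2⟩
    linarith
  have hpos := part1 t hlt ht2 hft
  have hzero : f t - f r + (d / D) * r - ((d + 1 - D) / D) * t = 0 := by
    rw [heq]; field_simp; ring
  linarith
end

section
/- Let f : ℝ → ℝ be continuous and nondecreasing, let a < b, and suppose f(b) - f(a) > b - a. Define t* to be the supremum of all s ∈ [a, b] with f(s) = f(a) + (s - a). Then t* < b, f(t*) = f(a) + (t* - a), and the interval [t*, b] is yellow for f, i.e., f(c) - f(t*) ≥ c - t* for all c ∈ [t*, b]. -/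
theorem stmt_9 (f : ℝ → ℝ) (hcont : Continuous f) (hmono : Monotone f)
    (a b : ℝ) (hab : a < b) (h : f b - f a > b - a) :
    sSup {s | s ∈ Set.Icc a b ∧ f s = f a + (s - a)} < b ∧
    f (sSup {s | s ∈ Set.Icc a b ∧ f s = f a + (s - a)})
      = f a + (sSup {s | s ∈ Set.Icc a b ∧ f s = f a + (s - a)} - a) ∧
    ∀ c ∈ Set.Icc (sSup {s | s ∈ Set.Icc a b ∧ f s = f a + (s - a)}) b,
      f c - f (sSup {s | s ∈ Set.Icc a b ∧ f s = f a + (s - a)})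
        ≥ c - sSup {s | s ∈ Set.Icc a b ∧ f s = f a + (s - a)} := by
  set S := {s | s ∈ Set.Icc a b ∧ f s = f a + (s - a)} with hS
  have haS : a ∈ S := ⟨⟨le_refl a, hab.le⟩, by ring⟩
  have hne : S.Nonempty := ⟨a, haS⟩
  have hbdd : BddAbove S := ⟨b, fun x hx => hx.1.2⟩
  have hclosed : IsClosed S := by
    have : S = Set.Icc a b ∩ (fun s => f s - (f a + (s - a))) ⁻¹' {0} := by
      ext x; simp [hS, sub_eq_zero]
    rw [this]
    exact isClosed_Icc.inter (isClosed_singleton.preimage (by continuity))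
  have hmem : sSup S ∈ S := hclosed.csSup_mem hne hbdd
  set t := sSup S
  have htb : t ≤ b := hmem.1.2
  have hat : a ≤ t := hmem.1.1
  have htlt : t < b := by
    rcases lt_or_eq_of_le htb with h1 | h1
    · exact h1
    · exfalso
      have := hmem.2
      rw [h1] at this
      linarith
  refine ⟨htlt, hmem.2, ?_⟩
  intro c hc
  by_contra hcon
  push_neg at hcon
  have hct : t < c := by
    rcases lt_or_eq_of_le hc.1 with h1 | h1
    · exact h1
    · exfalso; rw [← h1] at hcon; linarith
  have hcb : c < b := by
    rcases lt_or_eq_of_le hc.2 with h1 | h1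
    · exact h1
    · exfalso
      rw [h1] at hcon
      have := hmem.2
      linarith
  set g := fun x => f x - (f a + (x - a)) with hg
  have hgc : g c < 0 := by
    have := hmem.2
    simp only [hg]; linarith
  have hgb : 0 < g b := by simp only [hg]; linarith
  have hgcont : ContinuousOn g (Set.Icc c b) := by fun_prop
  obtain ⟨d, hd, hgd⟩ := intermediate_value_Icc hcb.le hgcont ⟨hgc.le, hgb.le⟩
  have hdS : d ∈ S := ⟨⟨le_trans hat (le_trans hct.le hd.1), hd.2⟩, by
    have h0 : f d - (f a + (d - a)) = 0 := hgd
    linarith⟩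
  have : d ≤ t := le_csSup hbdd hdS
  linarith [hd.1, hct]
end
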